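/- Define the quadratic forms Q₁ := −4u² − 2uv − 2v² − 10uw + 4vw − 4w², Q₂ := u² − 4uv − 3v² − 6uw + 2vw + 2w², Q₃ := −u² − 6uv + 8uw − 6vw − 3w² on ℝ³, with symmetric matrices M₁, M₂, M₃. Then: (1) for every (t₀, t₁) ∈ ℝ²∖{(0,0)}, the symmetric matrix t₀²M₁ + 2t₀t₁M₂ + t₁²M₃ has exactly one positive and two negative eigenvalues (counted with multiplicity); in particular, for every (t₀,t₁) ≠ (0,0) there exists (u,v,w) ∈ ℝ³∖{0} with t₀²Q₁ + 2t₀t₁Q₂ + t₁²Q₃ evaluated at (u,v,w) nonnegative, so the quadric surface bundle π₁ : Y → ℙ¹ is surjective on real points; (2) for every (u,v,w) ∈ ℝ³∖{0} with (Q₁Q₃ − Q₂²)(u,v,w) = 0, there is no pair (r,s) ∈ ℝ² with r² = Q₁(u,v,w), r·s = Q₂(u,v,w), s² = Q₃(u,v,w), i.e. the discriminant cover Δ̃ has no real points; (3) the polynomial −58t⁶ − 398t⁵ − 677t⁴ + 244t³ + 394t² − 24t − 108 is strictly negative for every t ∈ ℝ, i.e. the genus 2 curve Γ has no real points. -/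

import Mathlib

set_option maxHeartbeats 1000000
open Matrix


/-- `Q₁ = −4u² − 2uv − 2v² − 10uw + 4vw − 4w²`. -/
def Q₁ (u v w : ℝ) : ℝ :=
  -4 * u ^ 2 - 2 * u * v - 2 * v ^ 2 - 10 * u * w + 4 * v * w - 4 * w ^ 2

/-- `Q₂ = u² − 4uv − 3v² − 6uw + 2vw + 2w²`. -/
def Q₂ (u v w : ℝ) : ℝ :=
  u ^ 2 - 4 * u * v - 3 * v ^ 2 - 6 * u * w + 2 * v * w + 2 * w ^ 2

/-- `Q₃ = −u² − 6uv + 8uw − 6vw − 3w²`. -/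
def Q₃ (u v w : ℝ) : ℝ :=
  -u ^ 2 - 6 * u * v + 8 * u * w - 6 * v * w - 3 * w ^ 2

/-- The symmetric matrix of `Q₁`. -/
noncomputable def M₁ : Matrix (Fin 3) (Fin 3) ℝ := !![-4, -1, -5; -1, -2, 2; -5, 2, -4]

/-- The symmetric matrix of `Q₂`. -/
noncomputable def M₂ : Matrix (Fin 3) (Fin 3) ℝ := !![1, -2, -3; -2, -3, 1; -3, 1, 2]

/-- The symmetric matrix of `Q₃`. -/
noncomputable def M₃ : Matrix (Fin 3) (Fin 3) ℝ := !![-1, -3, 4; -3, 0, -3; 4, -3, -3]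

lemma trace_eq_sum_eigen' {n : Type*} [Fintype n] [DecidableEq n] {A : Matrix n n ℝ}
    (hA : A.IsHermitian) : A.trace = ∑ i, hA.eigenvalues i := by
  nth_rewrite 1 [hA.spectral_theorem]
  rw [Unitary.conjStarAlgAut_apply, Matrix.trace_mul_cycle, Unitary.coe_star_mul_self, Matrix.one_mul, Matrix.trace_diagonal]
  simp

lemma count_lemma' (e : Fin 3 → ℝ) (hdet : 0 < e 0 * e 1 * e 2) (htr : e 0 + e 1 + e 2 < 0) :
    (Finset.univ.filter fun i => 0 < e i).card = 1 ∧
    (Finset.univ.filter fun i => e i < 0).card = 2 := by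
  have h0 : e 0 ≠ 0 := by rintro h; rw [h] at hdet; linarith
  have h1 : e 1 ≠ 0 := by rintro h; rw [h] at hdet; nlinarith
  have h2 : e 2 ≠ 0 := by rintro h; rw [h] at hdet; nlinarith
  rcases h0.lt_or_gt with a0 | a0 <;> rcases h1.lt_or_gt with a1 | a1 <;>
    rcases h2.lt_or_gt with a2 | a2
  · exact absurd hdet (asymm (mul_neg_of_pos_of_neg (mul_pos_of_neg_of_neg a0 a1) a2))
  · exact ⟨by rw [Finset.card_filter, Fin.sum_univ_three, if_neg (asymm a0), if_neg (asymm a1),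
        if_pos a2],
      by rw [Finset.card_filter, Fin.sum_univ_three, if_pos a0, if_pos a1, if_neg (asymm a2)]⟩
  · exact ⟨by rw [Finset.card_filter, Fin.sum_univ_three, if_neg (asymm a0), if_pos a1,
        if_neg (asymm a2)],
      by rw [Finset.card_filter, Fin.sum_univ_three, if_pos a0, if_neg (asymm a1), if_pos a2]⟩
  · exact absurd hdet (asymm (mul_neg_of_neg_of_pos (mul_neg_of_neg_of_pos a0 a1) a2))
  · exact ⟨by rw [Finset.card_filter, Fin.sum_univ_three, if_pos a0, if_neg (asymm a1),
        if_neg (asymm a2)],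
      by rw [Finset.card_filter, Fin.sum_univ_three, if_neg (asymm a0), if_pos a1, if_pos a2]⟩
  · exact absurd hdet (asymm (mul_neg_of_neg_of_pos (mul_neg_of_pos_of_neg a0 a1) a2))
  · exact absurd hdet (asymm (mul_neg_of_pos_of_neg (mul_pos a0 a1) a2))
  · exact absurd htr (not_lt.2 (by linarith))

lemma hsmul' (c : ℝ) {A : Matrix (Fin 3) (Fin 3) ℝ} (h : A.IsHermitian) :
    (c • A).IsHermitian := by
  rw [Matrix.IsHermitian, Matrix.conjTranspose_smul, star_trivial, h]

lemma hermM₁' : M₁.IsHermitian := by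
  rw [Matrix.IsHermitian]; ext i j
  fin_cases i <;> fin_cases j <;> simp [M₁, Matrix.conjTranspose_apply]

lemma hermM₂' : M₂.IsHermitian := by
  rw [Matrix.IsHermitian]; ext i j
  fin_cases i <;> fin_cases j <;> simp [M₂, Matrix.conjTranspose_apply]

lemma hermM₃' : M₃.IsHermitian := by
  rw [Matrix.IsHermitian]; ext i j
  fin_cases i <;> fin_cases j <;> simp [M₃, Matrix.conjTranspose_apply]

lemma herm' (t₀ t₁ : ℝ) : (t₀ ^ 2 • M₁ + (2 * t₀ * t₁) • M₂ + t₁ ^ 2 • M₃).IsHermitian :=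
  ((hsmul' _ hermM₁').add (hsmul' _ hermM₂')).add (hsmul' _ hermM₃')

lemma det_comp' (t₀ t₁ : ℝ) : (t₀ ^ 2 • M₁ + (2 * t₀ * t₁) • M₂ + t₁ ^ 2 • M₃).det =
    58*t₀^6 + 398*t₀^5*t₁ + 677*t₀^4*t₁^2 - 244*t₀^3*t₁^3 - 394*t₀^2*t₁^4 + 24*t₀*t₁^5
      + 108*t₁^6 := by
  simp [Matrix.det_fin_three, M₁, M₂, M₃]
  ring

lemma trace_comp' (t₀ t₁ : ℝ) : (t₀ ^ 2 • M₁ + (2 * t₀ * t₁) • M₂ + t₁ ^ 2 • M₃).trace =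
    -10*t₀^2 - 4*t₁^2 := by
  simp [Matrix.trace_fin_three, M₁, M₂, M₃]
  ring

lemma nonzero_pair_sq {t₀ t₁ : ℝ} (hne : (t₀, t₁) ≠ (0, 0)) : 0 < t₀ ^ 2 + t₁ ^ 2 := by
  by_contra hc
  push_neg at hc
  have h0 : t₀ = 0 := by nlinarith [sq_nonneg t₀, sq_nonneg t₁]
  have h1 : t₁ = 0 := by nlinarith [sq_nonneg t₀, sq_nonneg t₁]
  exact hne (by rw [h0, h1])

lemma nonzero_pair_six {t₀ t₁ : ℝ} (hne : (t₀, t₁) ≠ (0, 0)) : 0 < t₀ ^ 6 + t₁ ^ 6 := by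
  have h := nonzero_pair_sq hne
  nlinarith [pow_pos h 3, mul_nonneg h.le (sq_nonneg (t₀^2 - t₁^2))]

lemma detpos' {t₀ t₁ : ℝ} (hne : (t₀, t₁) ≠ (0, 0)) :
    0 < (t₀ ^ 2 • M₁ + (2 * t₀ * t₁) • M₂ + t₁ ^ 2 • M₃).det := by
  rw [det_comp']
  have h6 := nonzero_pair_six hne
  nlinarith [sq_nonneg (107*t₁^3 + 12*t₀*t₁^2 - 230*t₀^2*t₁ - 63*t₀^3),
    sq_nonneg (6918*t₀*t₁^2 - 3553*t₀^2*t₁ - 1063*t₀^3),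
    sq_nonneg (1380511*t₀^2*t₁ + 404545*t₀^3), sq_nonneg (t₀^3), sq_nonneg (t₁^3)]

lemma traceneg' {t₀ t₁ : ℝ} (hne : (t₀, t₁) ≠ (0, 0)) :
    (t₀ ^ 2 • M₁ + (2 * t₀ * t₁) • M₂ + t₁ ^ 2 • M₃).trace < 0 := by
  rw [trace_comp']
  have h := nonzero_pair_sq hne
  nlinarith [sq_nonneg t₀, sq_nonneg t₁]

lemma counts' {t₀ t₁ : ℝ} (hne : (t₀, t₁) ≠ (0, 0)) :
    (Finset.univ.filter fun i => 0 < (herm' t₀ t₁).eigenvalues i).card = 1 ∧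
    (Finset.univ.filter fun i => (herm' t₀ t₁).eigenvalues i < 0).card = 2 := by
  have hd := (herm' t₀ t₁).det_eq_prod_eigenvalues
  rw [Fin.prod_univ_three] at hd
  have ht := trace_eq_sum_eigen' (herm' t₀ t₁)
  rw [Fin.sum_univ_three] at ht
  refine count_lemma' _ ?_ ?_
  · have := detpos' hne
    rw [hd] at this
    exact_mod_cast this
  · have := traceneg' hne
    rw [ht] at this
    exact this

/-- For the two-nested-ovals example `Q₁ = −4u²−2uv−2v²−10uw+4vw−4w²`,
`Q₂ = u²−4uv−3v²−6uw+2vw+2w²`, `Q₃ = −u²−6uv+8uw−6vw−3w²`: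
(1) for every `(t₀,t₁) ≠ (0,0)` the symmetric matrix `t₀²M₁ + 2t₀t₁M₂ + t₁²M₃` has exactly
one positive and two negative eigenvalues; in particular the quadric surface bundle
`π₁ : Y → ℙ¹` is surjective on real points; (2) the discriminant cover `Δ̃` has no real
points; (3) the polynomial `−58t⁶ − 398t⁵ − 677t⁴ + 244t³ + 394t² − 24t − 108` is strictly
negative on `ℝ`, i.e. the genus 2 curve `Γ` has no real points. -/
theorem rational_two_nested_ovals_example :
    (∀ t₀ t₁ : ℝ, (t₀, t₁) ≠ (0, 0) →
      ∃ h : (t₀ ^ 2 • M₁ + (2 * t₀ * t₁) • M₂ + t₁ ^ 2 • M₃).IsHermitian,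
        (Finset.univ.filter fun i => 0 < h.eigenvalues i).card = 1 ∧
        (Finset.univ.filter fun i => h.eigenvalues i < 0).card = 2) ∧
    (∀ t₀ t₁ : ℝ, (t₀, t₁) ≠ (0, 0) →
      ∃ u v w : ℝ, (u, v, w) ≠ (0, 0, 0) ∧
        0 ≤ t₀ ^ 2 * Q₁ u v w + 2 * t₀ * t₁ * Q₂ u v w + t₁ ^ 2 * Q₃ u v w) ∧
    (∀ u v w : ℝ, (u, v, w) ≠ (0, 0, 0) →
      Q₁ u v w * Q₃ u v w - Q₂ u v w ^ 2 = 0 →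
      ¬ ∃ r s : ℝ, r ^ 2 = Q₁ u v w ∧ r * s = Q₂ u v w ∧ s ^ 2 = Q₃ u v w) ∧
    (∀ t : ℝ, -58 * t ^ 6 - 398 * t ^ 5 - 677 * t ^ 4 + 244 * t ^ 3 + 394 * t ^ 2
        - 24 * t - 108 < 0) := by
  refine ⟨?_, ?_, ?_, ?_⟩
  · -- part 1a
    intro t₀ t₁ hne
    exact ⟨herm' t₀ t₁, counts' hne⟩
  · -- part 1b
    intro t₀ t₁ hne
    have h := herm' t₀ t₁
    have hcard := (counts' hne).1
    have hpos : ((Finset.univ.filter fun i => 0 < (herm' t₀ t₁).eigenvalues i)).Nonempty :=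
      Finset.card_pos.mp (by rw [hcard]; norm_num)
    obtain ⟨i, hi⟩ := hpos
    rw [Finset.mem_filter] at hi
    have hipos : 0 < (herm' t₀ t₁).eigenvalues i := hi.2
    set x : EuclideanSpace ℝ (Fin 3) := (herm' t₀ t₁).eigenvectorBasis i with hx
    have hmv := (herm' t₀ t₁).mulVec_eigenvectorBasis i
    have h0 := congrFun hmv 0
    have h1 := congrFun hmv 1
    have h2 := congrFun hmv 2
    rw [← hx] at h0 h1 h2
    simp only [Matrix.mulVec, dotProduct, Fin.sum_univ_three, Matrix.add_apply,
      Matrix.smul_apply, smul_eq_mul, Pi.smul_apply, M₁, M₂, M₃,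
      Matrix.cons_val', Matrix.cons_val_zero, Matrix.cons_val_one, Matrix.head_cons,
      Matrix.empty_val', Matrix.cons_val_fin_one, Matrix.head_fin_const, Matrix.cons_val_two,
      Matrix.tail_cons, Matrix.vecHead, Matrix.vecTail, Matrix.of_apply, Function.comp_apply,
      Fin.succ_zero_eq_one, Fin.succ_one_eq_two] at h0 h1 h2
    refine ⟨x 0, x 1, x 2, ?_, ?_⟩
    · intro hc
      have hc0 : x 0 = 0 := congrArg Prod.fst hc
      have hc1 : x 1 = 0 := congrArg Prod.fst (congrArg Prod.snd hc)
      have hc2 : x 2 = 0 := congrArg Prod.snd (congrArg Prod.snd hc)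
      have hxz : x = 0 := by
        apply PiLp.ext; intro j; fin_cases j <;> assumption
      have hn := (herm' t₀ t₁).eigenvectorBasis.orthonormal.1 i
      rw [← hx, hxz] at hn
      simp at hn
    · have expand : t₀ ^ 2 * Q₁ (x 0) (x 1) (x 2) + 2 * t₀ * t₁ * Q₂ (x 0) (x 1) (x 2)
          + t₁ ^ 2 * Q₃ (x 0) (x 1) (x 2)
          = (herm' t₀ t₁).eigenvalues i * ((x 0) ^ 2 + (x 1) ^ 2 + (x 2) ^ 2) := by
        simp only [Q₁, Q₂, Q₃, M₁, M₂, M₃]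
        linear_combination (x 0) * h0 + (x 1) * h1 + (x 2) * h2
      rw [expand]
      positivity
  · -- part 2
    intro u v w hne _hΔ
    rintro ⟨r, s, h1, h2, h3⟩
    have hW : 0 < u ^ 2 + v ^ 2 + w ^ 2 := by
      by_contra hc
      push_neg at hc
      have hu : u = 0 := by nlinarith [sq_nonneg u, sq_nonneg v, sq_nonneg w]
      have hv : v = 0 := by nlinarith [sq_nonneg u, sq_nonneg v, sq_nonneg w]
      have hw : w = 0 := by nlinarith [sq_nonneg u, sq_nonneg v, sq_nonneg w]
      exact hne (by rw [hu, hv, hw])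
    have hW2 : 0 < (u ^ 2 + v ^ 2 + w ^ 2) ^ 2 := by positivity
    have e1 : ((-19*u+38*v+2*w)*r + (19*u-42*v-9*w)*s) ^ 2
        = (-19*u+38*v+2*w)^2 * Q₁ u v w + 2*(-19*u+38*v+2*w)*(19*u-42*v-9*w) * Q₂ u v w
          + (19*u-42*v-9*w)^2 * Q₃ u v w := by
      linear_combination ((-19*u+38*v+2*w)^2) * h1
        + (2*(-19*u+38*v+2*w)*(19*u-42*v-9*w)) * h2 + ((19*u-42*v-9*w)^2) * h3
    have e2 : ((-25*u+56*v+11*w)*r + (2*u+4*v-8*w)*s) ^ 2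
        = (-25*u+56*v+11*w)^2 * Q₁ u v w + 2*(-25*u+56*v+11*w)*(2*u+4*v-8*w) * Q₂ u v w
          + (2*u+4*v-8*w)^2 * Q₃ u v w := by
      linear_combination ((-25*u+56*v+11*w)^2) * h1
        + (2*(-25*u+56*v+11*w)*(2*u+4*v-8*w)) * h2 + ((2*u+4*v-8*w)^2) * h3
    have e3 : ((12*u-28*v-2*w)*r + (8*u-11*v-12*w)*s) ^ 2
        = (12*u-28*v-2*w)^2 * Q₁ u v w + 2*(12*u-28*v-2*w)*(8*u-11*v-12*w) * Q₂ u v w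
          + (8*u-11*v-12*w)^2 * Q₃ u v w := by
      linear_combination ((12*u-28*v-2*w)^2) * h1
        + (2*(12*u-28*v-2*w)*(8*u-11*v-12*w)) * h2 + ((8*u-11*v-12*w)^2) * h3
    have e4 : ((-u+13*v+16*w)*r + (13*u+11*v-3*w)*s) ^ 2
        = (-u+13*v+16*w)^2 * Q₁ u v w + 2*(-u+13*v+16*w)*(13*u+11*v-3*w) * Q₂ u v w
          + (13*u+11*v-3*w)^2 * Q₃ u v w := by
      linear_combination ((-u+13*v+16*w)^2) * h1
        + (2*(-u+13*v+16*w)*(13*u+11*v-3*w)) * h2 + ((13*u+11*v-3*w)^2) * h3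
    have k1 := e1 ▸ sq_nonneg ((-19*u+38*v+2*w)*r + (19*u-42*v-9*w)*s)
    have k2 := e2 ▸ sq_nonneg ((-25*u+56*v+11*w)*r + (2*u+4*v-8*w)*s)
    have k3 := e3 ▸ sq_nonneg ((12*u-28*v-2*w)*r + (8*u-11*v-12*w)*s)
    have k4 := e4 ▸ sq_nonneg ((-u+13*v+16*w)*r + (13*u+11*v-3*w)*s)
    simp only [Q₁, Q₂, Q₃] at k1 k2 k3 k4
    linarith [k1, k2, k3, k4, hW2,
      sq_nonneg (5378*u^2 - 2952*v^2 - 402*w^2 - 10340*u*v - 921*u*w - 6295*v*w),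
      sq_nonneg (9464308*v^2 - 5436241*w^2 + 3493935*u*v + 12994486*u*w - 15344359*v*w),
      sq_nonneg (12897223359*w^2 + 7443021939*u*v - 6455679490*u*w + 23327303393*v*w),
      sq_nonneg (10955297368132*u*v - 15520131331187*u*w + 17549328550290*v*w),
      sq_nonneg (44681846047152619*u*w + 48265103034000412*v*w),
      sq_nonneg (v*w)]
  · -- part 3
    intro t
    nlinarith [sq_nonneg (107 + 12*t - 230*t^2 - 63*t^3), sq_nonneg (6918*t - 3553*t^2 - 1063*t^3),
      sq_nonneg (1380511*t^2 + 404545*t^3), sq_nonneg (t^3)]
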